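/- Let p, q, r > 2 be pairwise coprime integers. Then u = ⟨x_q·x_r⟩_p and v = ⟨y_p·y_r⟩_q, where u = x_1 and v = y_1. -/
import Mathlib

lemma aux_mod (a : ℕ) (s t : ℤ) (ha : 0 < (a:ℤ)) (cop : IsCoprime ((s*t)) (a:ℤ))
    (w : ℤ → ℤ)
    (hw1 : (1:ℤ) ≡ w 1 * (s*t) [ZMOD (a:ℤ)])
    (hws : s ≡ w s * (s*t) [ZMOD (a:ℤ)])
    (hwt : t ≡ w t * (s*t) [ZMOD (a:ℤ)])
    (h0 : 0 ≤ w 1) (h1 : w 1 < (a:ℤ)) :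
    w 1 = (w s * w t) % (a:ℤ) := by
  have h2 : w s * (s*t) * (w t * (s*t)) ≡ s * t [ZMOD (a:ℤ)] := (hws.mul hwt).symm
  have h3 : w 1 * (s*t) * (s*t) ≡ 1 * (s*t) [ZMOD (a:ℤ)] := hw1.symm.mul_right _
  have h4 : (s*t) * (s*t) * (w s * w t) ≡ (s*t) * (s*t) * (w 1) [ZMOD (a:ℤ)] := by
    have e2 : w s * (s*t) * (w t * (s*t)) = (s*t) * (s*t) * (w s * w t) := by ring
    have e3 : w 1 * (s*t) * (s*t) = (s*t) * (s*t) * (w 1) := by ring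
    rw [e2] at h2; rw [e3, one_mul] at h3
    exact h2.trans h3.symm
  have copc : Int.gcd (a:ℤ) ((s*t)*(s*t)) = 1 := by
    rw [Int.gcd_comm]; exact Int.isCoprime_iff_gcd_eq_one.mp (cop.mul_left cop)
  have h5 : w s * w t ≡ w 1 [ZMOD (a:ℤ)] := by
    have h6 := Int.ModEq.cancel_left_div_gcd ha h4
    rwa [copc, Nat.cast_one, Int.ediv_one] at h6
  have := h5.symm  -- w1 % a = (ws*wt) % a
  unfold Int.ModEq at this
  rw [← this, Int.emod_eq_of_lt h0 h1]

theorem stmt_11 (p q r : ℕ) (hp : 2 < p) (hq : 2 < q) (hr : 2 < r)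
    (cpq : Nat.Coprime p q) (cpr : Nat.Coprime p r) (cqr : Nat.Coprime q r)
    (x y z δ : ℤ → ℤ)
    (hrep : ∀ n : ℤ,
      n = x n * ((q : ℤ) * r) + y n * ((p : ℤ) * r) + z n * ((p : ℤ) * q) +
        δ n * ((p : ℤ) * q * r) ∧
      0 ≤ x n ∧ x n < (p : ℤ) ∧ 0 ≤ y n ∧ y n < (q : ℤ) ∧ 0 ≤ z n ∧ z n < (r : ℤ))
    (u v : ℤ) (hu : u = x 1) (hv : v = y 1) :
    u = (x q * x r) % (p : ℤ) ∧ v = (y p * y r) % (q : ℤ) := by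
  have hx : ∀ n : ℤ, n ≡ x n * ((q:ℤ)*r) [ZMOD (p:ℤ)] := by
    intro n
    have h := (hrep n).1
    refine (Int.modEq_iff_dvd.mpr ?_).symm
    exact ⟨y n * r + z n * q + δ n * (q*r), by linear_combination h⟩
  have hy : ∀ n : ℤ, n ≡ y n * ((p:ℤ)*r) [ZMOD (q:ℤ)] := by
    intro n
    have h := (hrep n).1
    refine (Int.modEq_iff_dvd.mpr ?_).symm
    exact ⟨x n * r + z n * p + δ n * (p*r), by linear_combination h⟩
  have copx : IsCoprime ((q:ℤ)*(r:ℤ)) (p:ℤ) := by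
    refine IsCoprime.mul_left ?_ ?_
    · exact (Int.isCoprime_iff_gcd_eq_one.mpr (by simpa using cpq.symm))
    · exact (Int.isCoprime_iff_gcd_eq_one.mpr (by simpa using cpr.symm))
  have copy : IsCoprime ((p:ℤ)*(r:ℤ)) (q:ℤ) := by
    refine IsCoprime.mul_left ?_ ?_
    · exact (Int.isCoprime_iff_gcd_eq_one.mpr (by simpa using cpq))
    · exact (Int.isCoprime_iff_gcd_eq_one.mpr (by simpa using cqr.symm))
  obtain ⟨_, hx0, hx1, hy0, hy1, _, _⟩ := hrep 1
  constructor
  · rw [hu]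
    exact aux_mod p q r (by exact_mod_cast (by omega : 0 < p)) copx x (hx 1) (hx q) (hx r) hx0 hx1
  · rw [hv]
    exact aux_mod q p r (by exact_mod_cast (by omega : 0 < q)) copy y (hy 1) (hy p) (hy r) hy0 hy1
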